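/- Let K be a differential ring with derivation D, let n be a natural number, and let a_0 = 1, a_1, ..., a_n ∈ K. Define I_k := Σ_{j=0}^{k} C(k,j) * a_{k−j} * Q_j(−a_1) for 0 ≤ k ≤ n. Then I_0 = 1, I_1 = 0, and for every y ∈ K one has the Miura (oper) expansion Σ_{i=0}^{n} C(n,i) * a_i * D^{n−i}(y) = Σ_{k=0}^{n} C(n,k) * I_k * ∇^{n−k}(y), where ∇(y) = D(y) + a_1*y and ∇^m is the m-th iterate of ∇. -/

import Mathlib

/-- Covariant Bell polynomials relative to `c`:
`Q 0 = 1`, `Q (m+1) = Δ_c (Q m) + u * Q m` where `Δ_c b = D b + c*b - b*c`. -/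
def qBell {K : Type*} [Ring K] (D : K → K) (c u : K) : ℕ → K
  | 0 => 1
  | m + 1 =>
      (D (qBell D c u m) + c * qBell D c u m - qBell D c u m * c)
        + u * qBell D c u m

section aux
variable {K : Type*} [Ring K]

theorem myD_zero (D : K → K) (hadd : ∀ a b : K, D (a + b) = D a + D b) : D 0 = 0 := by
  have h := hadd 0 0
  simpa using h.symm

theorem myD_one (D : K → K) (hmul : ∀ a b : K, D (a * b) = D a * b + a * D b) : D 1 = 0 := by
  have h := hmul 1 1
  simp at h
  have : D 1 + 0 = D 1 + D 1 := by simpa using h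
  exact (add_left_cancel this).symm

theorem myD_sum (D : K → K) (hadd : ∀ a b : K, D (a + b) = D a + D b)
    {ι : Type*} (s : Finset ι) (f : ι → K) :
    D (∑ i ∈ s, f i) = ∑ i ∈ s, D (f i) := by
  classical
  induction s using Finset.induction_on with
  | empty => simpa using myD_zero D hadd
  | insert _ _ h ih => rw [Finset.sum_insert h, hadd, ih, Finset.sum_insert h]

theorem myD_nat (D : K → K) (hadd : ∀ a b : K, D (a + b) = D a + D b)
    (hmul : ∀ a b : K, D (a * b) = D a * b + a * D b) (c : ℕ) : D (c : K) = 0 := by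
  induction c with
  | zero => simpa using myD_zero D hadd
  | succ m ih =>
      have : ((m + 1 : ℕ) : K) = (m : K) + 1 := by push_cast; noncomm_ring
      rw [this, hadd, ih, myD_one D hmul, add_zero]

theorem qBell_succ (D : K → K) (c : K) (j : ℕ) :
    qBell D c (-c) (j + 1) = D (qBell D c (-c) j) - qBell D c (-c) j * c := by
  show (D (qBell D c (-c) j) + c * qBell D c (-c) j - qBell D c (-c) j * c)
        + (-c) * qBell D c (-c) j = _
  noncomm_ring

/-- Key expansion: `D^[m] y = ∑ C(m,j) Q_j ∇^[m-j] y`. -/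
theorem iter_expand (D : K → K) (hadd : ∀ a b : K, D (a + b) = D a + D b)
    (hmul : ∀ a b : K, D (a * b) = D a * b + a * D b) (c : K) (m : ℕ) (y : K) :
    D^[m] y = ∑ j ∈ Finset.range (m + 1),
      (m.choose j : K) * qBell D c (-c) j * (fun z => D z + c * z)^[m - j] y := by
  set Q := qBell D c (-c) with hQ
  set N := fun z : K => D z + c * z with hN
  induction m with
  | zero => simp [Q, qBell]
  | succ m ih =>
      rw [Function.iterate_succ_apply', ih, myD_sum D hadd]
      have hterm : ∀ j ∈ Finset.range (m + 1),
          D ((m.choose j : K) * Q j * N^[m - j] y)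
            = (m.choose j : K) * (Q (j+1) * N^[m - j] y + Q j * N^[m - j + 1] y) := by
        intro j hj
        have hcast : D ((m.choose j : K)) = 0 := myD_nat D hadd hmul _
        rw [mul_assoc, hmul, hcast, zero_mul, zero_add, hmul]
        have hDQ : D (Q j) = Q (j+1) + Q j * c := by
          rw [hQ, qBell_succ D c j]; noncomm_ring
        have hDN : D (N^[m - j] y) = N^[m - j + 1] y - c * N^[m - j] y := by
          rw [Function.iterate_succ_apply']
          show _ = (D (N^[m-j] y) + c * N^[m-j] y) - _
          noncomm_ring
        rw [hDQ, hDN]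
        noncomm_ring
      rw [Finset.sum_congr rfl hterm]
      have expand : ∀ j, (m.choose j : K) * (Q (j+1) * N^[m - j] y + Q j * N^[m - j + 1] y)
          = (m.choose j : K) * Q (j+1) * N^[m - j] y
            + (m.choose j : K) * Q j * N^[m - j + 1] y := fun j => by noncomm_ring
      simp only [expand]
      rw [Finset.sum_add_distrib]
      rw [Finset.sum_range_succ' (fun j => ((m+1).choose j : K) * Q j * N^[m + 1 - j] y) (m+1)]
      rw [Finset.sum_range_succ (fun j => ((m+1).choose (j+1) : K) * Q (j+1) * N^[m + 1 - (j+1)] y) m]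
      rw [Finset.sum_range_succ (fun j => (m.choose j : K) * Q (j+1) * N^[m - j] y) m]
      rw [Finset.sum_range_succ' (fun j => (m.choose j : K) * Q j * N^[m - j + 1] y) m]
      have h1 : ∀ j ∈ Finset.range m,
          ((m+1).choose (j+1) : K) * Q (j+1) * N^[m + 1 - (j+1)] y
            = (m.choose j : K) * Q (j+1) * N^[m - j] y
              + (m.choose (j+1) : K) * Q (j+1) * N^[m - (j+1) + 1] y := by
        intro j hj
        rw [Finset.mem_range] at hj
        have h3 : m + 1 - (j + 1) = m - j := by omega
        have h2 : m - (j+1) + 1 = m - j := by omega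
        rw [h3, h2, Nat.choose_succ_succ, Nat.cast_add]
        noncomm_ring
      rw [Finset.sum_congr rfl h1, Finset.sum_add_distrib]
      simp [Q, qBell, Nat.sub_self]
      abel

end aux

theorem tri {M : Type*} [AddCommMonoid M] (n : ℕ) (f : ℕ → ℕ → M) :
    ∑ i ∈ Finset.range (n+1), ∑ j ∈ Finset.range (n+1-i), f i j
      = ∑ k ∈ Finset.range (n+1), ∑ j ∈ Finset.range (k+1), f (k-j) j := by
  induction n with
  | zero => simp
  | succ n ih =>
    rw [Finset.sum_range_succ (fun i => ∑ j ∈ Finset.range (n+1+1-i), f i j) (n+1)]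
    rw [Finset.sum_range_succ (fun k => ∑ j ∈ Finset.range (k+1), f (k-j) j) (n+1)]
    have hlast : n+1+1-(n+1) = 1 := by omega
    rw [hlast, Finset.sum_range_one]
    have hinner : ∀ i ∈ Finset.range (n+1),
        ∑ j ∈ Finset.range (n+1+1-i), f i j
          = (∑ j ∈ Finset.range (n+1-i), f i j) + f i (n+1-i) := by
      intro i hi
      rw [Finset.mem_range] at hi
      have h : n+1+1-i = (n+1-i)+1 := by omega
      rw [h, Finset.sum_range_succ]
    rw [Finset.sum_congr rfl hinner, Finset.sum_add_distrib, ih]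
    have hr : ∑ j ∈ Finset.range (n+1+1), f (n+1-j) j
        = (∑ j ∈ Finset.range (n+1), f (n-j) (j+1)) + f (n+1) 0 := by
      rw [Finset.sum_range_succ' (fun j => f (n+1-j) j) (n+1)]
      congr 1
      apply Finset.sum_congr rfl
      intro j hj
      congr 1
      omega
    have hl : ∑ i ∈ Finset.range (n+1), f i (n+1-i)
        = ∑ j ∈ Finset.range (n+1), f (n-j) (j+1) := by
      rw [← Finset.sum_range_reflect (fun i => f i (n+1-i)) (n+1)]
      apply Finset.sum_congr rfl
      intro j hj
      rw [Finset.mem_range] at hj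
      have h1 : n+1-1-j = n-j := by omega
      have h2 : n+1-(n-j) = j+1 := by omega
      rw [h1, h2]
    rw [hr, hl]
    abel

theorem natcoef {n k j : ℕ} (hj : j ≤ k) (hk : k ≤ n) :
    n.choose (k-j) * (n-(k-j)).choose j = n.choose k * k.choose j := by
  have h1 := Nat.choose_mul (n := n) (k := k) (show k - j ≤ k by omega)
  have h2 : k - (k - j) = j := by omega
  rw [h2] at h1
  rw [Nat.choose_symm hj] at h1
  exact h1.symm


/-- the Miura (oper) expansion with
`I k = ∑_{j≤k} C(k,j) a_{k-j} Q_j(-a₁)`. -/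
theorem miura_oper_expansion {K : Type*} [Ring K] (D : K → K)
    (hadd : ∀ a b : K, D (a + b) = D a + D b)
    (hmul : ∀ a b : K, D (a * b) = D a * b + a * D b)
    (n : ℕ) (a : ℕ → K) (ha0 : a 0 = 1)
    (I : ℕ → K)
    (hI : ∀ k, I k = ∑ j ∈ Finset.range (k + 1),
      (k.choose j : K) * a (k - j) * qBell D (a 1) (-(a 1)) j) :
    I 0 = 1 ∧ I 1 = 0 ∧
      ∀ y : K,
        ∑ i ∈ Finset.range (n + 1), (n.choose i : K) * a i * D^[n - i] y
          = ∑ k ∈ Finset.range (n + 1),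
              (n.choose k : K) * I k * (fun z => D z + a 1 * z)^[n - k] y := by
  refine ⟨?_, ?_, ?_⟩
  · rw [hI]; simp [qBell, ha0]
  · rw [hI]
    rw [Finset.sum_range_succ, Finset.sum_range_one]
    simp only [qBell, ha0, Nat.choose_self, Nat.choose_zero_right, Nat.cast_one, one_mul,
      mul_one, Nat.sub_self, Nat.sub_zero]
    rw [myD_one D hmul]
    noncomm_ring
  · intro y
    have step1 : ∀ i ∈ Finset.range (n+1),
        (n.choose i : K) * a i * D^[n - i] y
          = ∑ j ∈ Finset.range (n+1-i),
              ((n.choose i : K) * a i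
                * (((n-i).choose j : K) * qBell D (a 1) (-(a 1)) j
                    * (fun z => D z + a 1 * z)^[n - i - j] y)) := by
      intro i hi
      rw [Finset.mem_range] at hi
      rw [iter_expand D hadd hmul (a 1) (n-i) y]
      have h : n - i + 1 = n + 1 - i := by omega
      rw [h, Finset.mul_sum]
    rw [Finset.sum_congr rfl step1]
    rw [tri n (fun i j => (n.choose i : K) * a i
        * (((n-i).choose j : K) * qBell D (a 1) (-(a 1)) j
            * (fun z => D z + a 1 * z)^[n - i - j] y))]
    apply Finset.sum_congr rfl
    intro k hk
    rw [Finset.mem_range] at hk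
    have hk' : k ≤ n := by omega
    rw [hI k, Finset.mul_sum, Finset.sum_mul]
    apply Finset.sum_congr rfl
    intro j hj
    rw [Finset.mem_range] at hj
    have hj' : j ≤ k := by omega
    have hidx : n - (k - j) - j = n - k := by omega
    rw [hidx]
    have hcomm : a (k-j) * (((n-(k-j)).choose j : ℕ) : K)
        = (((n-(k-j)).choose j : ℕ) : K) * a (k-j) :=
      (Nat.cast_commute ((n-(k-j)).choose j) (a (k-j))).symm.eq
    have hcoef : ((n.choose (k-j) : ℕ) : K) * (((n-(k-j)).choose j : ℕ) : K)
        = ((n.choose k : ℕ) : K) * ((k.choose j : ℕ) : K) := by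
      rw [← Nat.cast_mul, ← Nat.cast_mul, natcoef hj' hk']
    calc
      (n.choose (k-j) : K) * a (k-j)
          * (((n-(k-j)).choose j : K) * qBell D (a 1) (-(a 1)) j
              * (fun z => D z + a 1 * z)^[n - k] y)
        = (n.choose (k-j) : K) * (a (k-j) * (((n-(k-j)).choose j : K)))
            * (qBell D (a 1) (-(a 1)) j * (fun z => D z + a 1 * z)^[n - k] y) := by
          noncomm_ring
      _ = (n.choose (k-j) : K) * ((((n-(k-j)).choose j : K)) * a (k-j))
            * (qBell D (a 1) (-(a 1)) j * (fun z => D z + a 1 * z)^[n - k] y) := by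
          rw [hcomm]
      _ = ((n.choose (k-j) : K) * (((n-(k-j)).choose j : K)))
            * (a (k-j) * qBell D (a 1) (-(a 1)) j * (fun z => D z + a 1 * z)^[n - k] y) := by
          noncomm_ring
      _ = ((n.choose k : K) * ((k.choose j : K)))
            * (a (k-j) * qBell D (a 1) (-(a 1)) j * (fun z => D z + a 1 * z)^[n - k] y) := by
          rw [hcoef]
      _ = (n.choose k : K) * ((k.choose j : K) * a (k-j) * qBell D (a 1) (-(a 1)) j)
            * (fun z => D z + a 1 * z)^[n - k] y := by
          noncomm_ring
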